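/- If a splitter object guarantees that at most one process wins, and a process p wins the splitter and subsequently commits a value u into the decision register d before any process sets the conflict flag c, then every other process that completes its invocation must adopt the value u; hence no two processes commit different values (coherence of the grafarius). -/
import Mathlib

/-- Coherence of the grafarius: if the splitter has at most one winner, and the
winner `p` commits `u` into the decision register `d` before any process sets
the conflict flag `c`, then every other completing process adopts `u`, and no
two processes commit different values. -/
theorem stmt1 {P V : Type} (p : P) (u : V)
    (win completes : P → Prop)
    (d : ℕ → Option V) (c : ℕ → Bool)
    (commits adopts : P → V → Prop)
    (tw t0 : ℕ) (ts tr : P → ℕ)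
    -- at most one process wins the splitter
    (hwin1 : ∀ q q', win q → win q' → q = q')
    (hwp : win p)
    -- p writes u to d at time tw and d keeps this value afterwards
    (hd : ∀ t, tw ≤ t → d t = some u)
    -- only the unique winner p ever writes to d, and it writes u
    (hdval : ∀ t v, d t = some v → v = u)
    -- p commits u at time t0 > tw, before any process sets the conflict flag
    (horder : tw < t0)
    (hc : ∀ t, t < t0 → c t = false)
    (hcommitp : commits p u)
    -- every other completing process loses the splitter: it sets c at time
    -- (ts q), then reads d at time (tr q) and adopts the value it reads
    (hlose : ∀ q, q ≠ p → completes q →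
      c (ts q) = true ∧ ts q < tr q ∧ ∀ v, d (tr q) = some v → adopts q v)
    -- only a winner commits, and any committed value was written to d
    (hcommitwin : ∀ q v, commits q v → win q ∧ ∃ t, d t = some v) :
    (∀ q, q ≠ p → completes q → adopts q u) ∧ (∀ q v, commits q v → v = u) := by
  constructor
  · intro q hq hcq
    obtain ⟨hcts, hlt, hadopt⟩ := hlose q hq hcq
    have hts : t0 ≤ ts q := by
      by_contra h
      push_neg at h
      rw [hc _ h] at hcts
      exact Bool.false_ne_true hcts
    exact hadopt u (hd _ (by omega))
  · intro q v hcv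
    obtain ⟨_, t, ht⟩ := hcommitwin q v hcv
    exact hdval t v ht
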